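/- Let S and A be finite nonempty sets, let d, n ≥ 1 be integers and λ > 0, B > 0, ζ ≥ 0 reals. Let P : S×A → Δ(S) be a probability transition. Let φ̂ : S×A → ℝ^d with ‖φ̂(s,a)‖₂ ≤ 1 and ŵ : S → ℝ^d be such that P̂(s′|s,a) := ⟨φ̂(s,a), ŵ(s′)⟩ satisfies P̂(s′|s,a) ≥ 0 and Σ_{s′} P̂(s′|s,a) ≤ 1 for all (s,a), and ‖Σ_{s′∈S} ŵ(s′)·l(s′)‖₂ ≤ √d for every l : S → [0,1]. Fix g : S×A → [0,B] and define f_g(s) := (1/|A|)·Σ_{a∈A} g(s,a). Let μ be a distribution on S×A with Σ_{(s̃,ã)} μ(s̃,ã)·( Σ_{s∈S} (P̂(s|s̃,ã) − P(s|s̃,ã))·f_g(s) )² ≤ ζ. Set Σ̂_μ := n·Σ_{(s,a)} μ(s,a)·φ̂(s,a)φ̂(s,a)ᵀ + λ·I_d and define ν on S×A by ν(s,a) := (1/|A|)·Σ_{(s̃,ã)} μ(s̃,ã)·P(s|s̃,ã). Let q′ be any distribution on S×A, π : S → Δ(A) a policy, and q(s,a) := Σ_{(s̃,ã)} q′(s̃,ã)·P̂(s|s̃,ã)·π(a|s).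 Then: Σ_{(s,a)} q(s,a)·g(s,a) ≤ E_{(s̃,ã)∼q′}[ min{ ‖φ̂(s̃,ã)‖_{Σ̂_μ^{-1}} · √( 2n·|A|²·E_{(s,a)∼ν}[g(s,a)²] + B²·λ·d + 2n·|A|²·ζ ), B } ]. -/

import Mathlib

open Finset Matrix

/-- Euclidean (ℓ²) norm of a finite-dimensional real vector. -/
noncomputable def l2norm {ι : Type*} [Fintype ι] (x : ι → ℝ) : ℝ :=
  Real.sqrt (∑ i, x i ^ 2)

/-- Matrix-weighted norm ‖x‖_M = √(xᵀ M x). -/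
noncomputable def matNorm {ι : Type*} [Fintype ι] (M : Matrix ι ι ℝ) (x : ι → ℝ) : ℝ :=
  Real.sqrt (x ⬝ᵥ M.mulVec x)


lemma cs_mat {ι : Type*} [Fintype ι] [DecidableEq ι] {M : Matrix ι ι ℝ} (hM : M.PosDef)
    (x y : ι → ℝ) : (x ⬝ᵥ y) ^ 2 ≤ (x ⬝ᵥ M⁻¹ *ᵥ x) * (y ⬝ᵥ M *ᵥ y) := by
  have hdet : IsUnit M.det := isUnit_iff_ne_zero.2 hM.det_pos.ne'
  set u : ι → ℝ := M⁻¹ *ᵥ x with hu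
  have hMu : M *ᵥ u = x := by
    rw [hu, mulVec_mulVec, Matrix.mul_nonsing_inv _ hdet, one_mulVec]
  have hsym : Mᵀ = M := hM.isHermitian
  have cross : ∀ v, u ⬝ᵥ (M *ᵥ v) = x ⬝ᵥ v := by
    intro v
    rw [dotProduct_mulVec]
    have : u ᵥ* M = M *ᵥ u := by rw [← hsym, vecMul_transpose, hsym]
    rw [this, hMu]
  have hux : u ⬝ᵥ x = x ⬝ᵥ M⁻¹ *ᵥ x := by rw [dotProduct_comm, hu]
  have key : ∀ t : ℝ, 0 ≤ (y ⬝ᵥ M *ᵥ y) * (t * t) + (2 * (x ⬝ᵥ y)) * t + (x ⬝ᵥ M⁻¹ *ᵥ x) := by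
    intro t
    have h0 := hM.posSemidef.dotProduct_mulVec_nonneg (u + t • y)
    simp only [star_trivial] at h0
    have expand : (u + t • y) ⬝ᵥ M *ᵥ (u + t • y)
        = (y ⬝ᵥ M *ᵥ y) * (t * t) + (2 * (x ⬝ᵥ y)) * t + (x ⬝ᵥ M⁻¹ *ᵥ x) := by
      simp only [mulVec_add, mulVec_smul, add_dotProduct, dotProduct_add, smul_dotProduct,
        dotProduct_smul, smul_eq_mul, hMu, cross, hux, dotProduct_comm y x]
      ring
    linarith [expand ▸ h0]
  have hd := discrim_le_zero key
  rw [discrim] at hd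
  nlinarith [hd]

/-- Jensen / Cauchy–Schwarz for a subprobability vector. -/
lemma jensen_sq {ι : Type*} [Fintype ι] (pv f : ι → ℝ) (hp : ∀ s, 0 ≤ pv s)
    (hps : ∑ s, pv s ≤ 1) (hf2 : 0 ≤ ∑ s, pv s * f s ^ 2) :
    (∑ s, pv s * f s) ^ 2 ≤ ∑ s, pv s * f s ^ 2 := by
  have h := sum_mul_sq_le_sq_mul_sq univ (fun s => Real.sqrt (pv s))
      (fun s => Real.sqrt (pv s) * f s)
  have e1 : ∀ s : ι, Real.sqrt (pv s) * (Real.sqrt (pv s) * f s) = pv s * f s := by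
    intro s; rw [← mul_assoc, Real.mul_self_sqrt (hp s)]
  have e2 : ∀ s : ι, Real.sqrt (pv s) ^ 2 = pv s := fun s => Real.sq_sqrt (hp s)
  have e3 : ∀ s : ι, (Real.sqrt (pv s) * f s) ^ 2 = pv s * f s ^ 2 := by
    intro s; rw [mul_pow, e2]
  simp only [e1, e2, e3] at h
  calc (∑ s, pv s * f s) ^ 2 ≤ (∑ s, pv s) * ∑ s, pv s * f s ^ 2 := h
    _ ≤ 1 * ∑ s, pv s * f s ^ 2 := by
        exact mul_le_mul_of_nonneg_right hps hf2
    _ = _ := one_mul _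

/-- Model-free one-step back inequality for the learned low-rank transition model. -/
theorem one_step_back_model_free
    {S A : Type*} [Fintype S] [Nonempty S] [Fintype A] [Nonempty A]
    {d n : ℕ} (hd : 1 ≤ d) (hn : 1 ≤ n)
    {lam B ζ : ℝ} (hlam : 0 < lam) (hB : 0 < B) (hζ : 0 ≤ ζ)
    (P : S × A → S → ℝ) (hPpos : ∀ p s', 0 ≤ P p s') (hPsum : ∀ p, ∑ s', P p s' = 1)
    (φhat : S × A → Fin d → ℝ) (hφhat : ∀ p, l2norm (φhat p) ≤ 1)
    (what : S → Fin d → ℝ)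
    (Phat : S × A → S → ℝ) (hPhat : ∀ p s', Phat p s' = ∑ j, φhat p j * what s' j)
    (hPhatpos : ∀ p s', 0 ≤ Phat p s') (hPhatsum : ∀ p, ∑ s', Phat p s' ≤ 1)
    (hwhat : ∀ l : S → ℝ, (∀ s', l s' ∈ Set.Icc (0 : ℝ) 1) →
      l2norm (fun j => ∑ s', what s' j * l s') ≤ Real.sqrt d)
    (g : S × A → ℝ) (hg : ∀ p, g p ∈ Set.Icc (0 : ℝ) B)
    (fg : S → ℝ) (hfg : ∀ s, fg s = (1 / (Fintype.card A : ℝ)) * ∑ a, g (s, a))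
    (μ : S × A → ℝ) (hμpos : ∀ p, 0 ≤ μ p) (hμsum : ∑ p, μ p = 1)
    (hμerr : ∑ p, μ p * (∑ s', (Phat p s' - P p s') * fg s') ^ 2 ≤ ζ)
    (Sighat : Matrix (Fin d) (Fin d) ℝ)
    (hSighat : Sighat = (n : ℝ) • (∑ p, μ p • vecMulVec (φhat p) (φhat p)) +
      lam • (1 : Matrix (Fin d) (Fin d) ℝ))
    (ν : S × A → ℝ)
    (hν : ∀ p : S × A, ν p = (1 / (Fintype.card A : ℝ)) * ∑ p', μ p' * P p' p.1)
    (q' : S × A → ℝ) (hq'pos : ∀ p, 0 ≤ q' p) (hq'sum : ∑ p, q' p = 1)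
    (pol : S → A → ℝ) (hpolpos : ∀ s a, 0 ≤ pol s a) (hpolsum : ∀ s, ∑ a, pol s a = 1)
    (q : S × A → ℝ)
    (hq : ∀ p : S × A, q p = ∑ p', q' p' * Phat p' p.1 * pol p.1 p.2) :
    (∑ p, q p * g p) ≤
      ∑ p, q' p *
        min (matNorm Sighat⁻¹ (φhat p) *
          Real.sqrt (2 * (n : ℝ) * (Fintype.card A : ℝ) ^ 2 * (∑ p', ν p' * g p' ^ 2)
            + B ^ 2 * lam * d + 2 * (n : ℝ) * (Fintype.card A : ℝ) ^ 2 * ζ)) B := by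
  classical
  set k : ℝ := (Fintype.card A : ℝ) with hk
  have hk0 : (0 : ℝ) < k := by
    simp only [hk, Nat.cast_pos]; exact Fintype.card_pos
  have hg0 : ∀ p, 0 ≤ g p := fun p => (hg p).1
  have hgB : ∀ p, g p ≤ B := fun p => (hg p).2
  set h : S → ℝ := fun s => ∑ a, pol s a * g (s, a) with hh
  have hpol1 : ∀ s a, pol s a ≤ 1 := by
    intro s a
    calc pol s a ≤ ∑ a', pol s a' :=
          Finset.single_le_sum (fun a' _ => hpolpos s a') (mem_univ a)
      _ = 1 := hpolsum s
  have hh0 : ∀ s, 0 ≤ h s := fun s =>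
    Finset.sum_nonneg fun a _ => mul_nonneg (hpolpos s a) (hg0 _)
  have hhB : ∀ s, h s ≤ B := by
    intro s
    calc h s ≤ ∑ a, pol s a * B :=
          Finset.sum_le_sum fun a _ => mul_le_mul_of_nonneg_left (hgB _) (hpolpos s a)
      _ = B := by rw [← Finset.sum_mul, hpolsum s, one_mul]
  have hfg0 : ∀ s, 0 ≤ fg s := by
    intro s; rw [hfg]
    exact mul_nonneg (by positivity) (Finset.sum_nonneg fun a _ => hg0 _)
  have hhfg : ∀ s, h s ≤ k * fg s := by
    intro s; rw [hfg, ← mul_assoc, mul_one_div, div_self hk0.ne', one_mul]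
    exact Finset.sum_le_sum fun a _ => by
      have := mul_le_mul_of_nonneg_right (hpol1 s a) (hg0 (s, a))
      simpa using this
  -- the vector w
  set w : Fin d → ℝ := fun j => ∑ s, what s j * h s with hw
  have key1 : ∀ p : S × A, ∑ s, Phat p s * h s = φhat p ⬝ᵥ w := by
    intro p
    simp only [dotProduct, hw]
    calc ∑ s, Phat p s * h s = ∑ s, ∑ j, φhat p j * (what s j * h s) := by
          refine Finset.sum_congr rfl fun s _ => ?_
          rw [hPhat, Finset.sum_mul]
          exact Finset.sum_congr rfl fun j _ => by ring
      _ = ∑ j, ∑ s, φhat p j * (what s j * h s) := Finset.sum_comm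
      _ = ∑ j, φhat p j * ∑ s, what s j * h s := by
          exact Finset.sum_congr rfl fun j _ => (Finset.mul_sum _ _ _).symm
  -- quadratic form of the middle matrix
  set M : Matrix (Fin d) (Fin d) ℝ := ∑ p, μ p • vecMulVec (φhat p) (φhat p) with hM
  have hMquad : ∀ v : Fin d → ℝ, v ⬝ᵥ (M *ᵥ v) = ∑ p, μ p * (φhat p ⬝ᵥ v) ^ 2 := by
    intro v
    have rhs : ∀ p : S × A, μ p * (φhat p ⬝ᵥ v) ^ 2
        = ∑ i, ∑ j, v i * (μ p * (φhat p i * φhat p j) * v j) := by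
      intro p
      rw [sq, dotProduct, Finset.sum_mul_sum, Finset.mul_sum]
      refine Finset.sum_congr rfl fun i _ => ?_
      rw [Finset.mul_sum]
      exact Finset.sum_congr rfl fun j _ => by ring
    simp only [rhs]
    rw [Finset.sum_comm]
    simp only [dotProduct, Matrix.mulVec, hM, Matrix.sum_apply, Matrix.smul_apply,
      vecMulVec_apply, smul_eq_mul]
    refine Finset.sum_congr rfl fun i _ => ?_
    rw [Finset.mul_sum, Finset.sum_comm]
    refine Finset.sum_congr rfl fun j _ => ?_
    rw [Finset.sum_mul, Finset.mul_sum]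
  -- positive definiteness of Sighat
  have hMpsd : ((n : ℝ) • M).PosSemidef := by
    refine Matrix.PosSemidef.of_dotProduct_mulVec_nonneg ?_ ?_
    · rw [hM]
      ext i j
      simp only [conjTranspose_apply, Matrix.smul_apply, Matrix.sum_apply, vecMulVec_apply,
        smul_eq_mul, star_trivial]
      rw [Finset.mul_sum, Finset.mul_sum]
      exact Finset.sum_congr rfl fun p _ => by ring
    · intro x
      simp only [star_trivial, Matrix.smul_mulVec, dotProduct_smul, smul_eq_mul]
      rw [hMquad]
      have : 0 ≤ ∑ p, μ p * (φhat p ⬝ᵥ x) ^ 2 :=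
        Finset.sum_nonneg fun p _ => mul_nonneg (hμpos p) (sq_nonneg _)
      positivity
  have hlam1 : (lam • (1 : Matrix (Fin d) (Fin d) ℝ)).PosDef := by
    refine Matrix.PosDef.of_dotProduct_mulVec_pos ?_ ?_
    · ext i j
      simp only [conjTranspose_apply, Matrix.smul_apply, Matrix.one_apply, smul_eq_mul,
        star_trivial]
      by_cases hij : i = j <;> simp [hij, eq_comm]
    · intro x hx
      simp only [star_trivial, Matrix.smul_mulVec, one_mulVec, dotProduct_smul,
        smul_eq_mul]
      have hxx : 0 < x ⬝ᵥ x := by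
        rcases lt_or_eq_of_le (Finset.sum_nonneg fun i (_ : i ∈ univ) => mul_self_nonneg (x i)) with h' | h'
        · exact h'
        · exact absurd (dotProduct_self_eq_zero.1 h'.symm) hx
      exact mul_pos hlam hxx
  have hSigPD : Sighat.PosDef := by
    rw [hSighat]
    exact Matrix.PosDef.posSemidef_add hMpsd hlam1
  -- Jensen-type bounds
  have hfgsq : ∀ s, fg s ^ 2 ≤ (1 / k) * ∑ a, g (s, a) ^ 2 := by
    intro s
    have hcs2 := sum_mul_sq_le_sq_mul_sq univ (fun _ : A => (1 : ℝ)) (fun a => g (s, a))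
    simp only [one_mul, one_pow, Finset.sum_const, card_univ, nsmul_eq_mul, mul_one] at hcs2
    rw [hfg]
    rw [mul_pow]
    have h1 : (1 / k) ^ 2 * (∑ a, g (s, a)) ^ 2 ≤ (1 / k) ^ 2 * (k * ∑ a, g (s, a) ^ 2) :=
      mul_le_mul_of_nonneg_left hcs2 (by positivity)
    calc (1 / k) ^ 2 * (∑ a, g (s, a)) ^ 2 ≤ (1 / k) ^ 2 * (k * ∑ a, g (s, a) ^ 2) := h1
      _ = (1 / k) * ∑ a, g (s, a) ^ 2 := by field_simp
  have hjens : ∀ p : S × A, (∑ s, P p s * fg s) ^ 2 ≤ ∑ s, P p s * fg s ^ 2 := by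
    intro p
    refine jensen_sq (P p) fg (hPpos p) (le_of_eq (hPsum p)) ?_
    exact Finset.sum_nonneg fun s _ => mul_nonneg (hPpos p s) (sq_nonneg _)
  have hm0 : ∀ s, 0 ≤ ∑ p, μ p * P p s :=
    fun s => Finset.sum_nonneg fun p _ => mul_nonneg (hμpos p) (hPpos p s)
  have hE0 : 0 ≤ ∑ p', ν p' * g p' ^ 2 := by
    refine Finset.sum_nonneg fun p _ => mul_nonneg ?_ (sq_nonneg _)
    rw [hν]
    exact mul_nonneg (by positivity) (hm0 p.1)
  have hνbound : ∑ p, μ p * (∑ s, P p s * fg s) ^ 2 ≤ ∑ p', ν p' * g p' ^ 2 := by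
    calc ∑ p, μ p * (∑ s, P p s * fg s) ^ 2
        ≤ ∑ p, μ p * ∑ s, P p s * fg s ^ 2 :=
          Finset.sum_le_sum fun p _ => mul_le_mul_of_nonneg_left (hjens p) (hμpos p)
      _ = ∑ s, (∑ p, μ p * P p s) * fg s ^ 2 := by
          simp only [Finset.mul_sum]
          rw [Finset.sum_comm]
          refine Finset.sum_congr rfl fun s _ => ?_
          rw [Finset.sum_mul]
          exact Finset.sum_congr rfl fun p _ => by ring
      _ ≤ ∑ s, (∑ p, μ p * P p s) * ((1 / k) * ∑ a, g (s, a) ^ 2) :=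
          Finset.sum_le_sum fun s _ => mul_le_mul_of_nonneg_left (hfgsq s) (hm0 s)
      _ = ∑ p', ν p' * g p' ^ 2 := by
          rw [Fintype.sum_prod_type]
          refine Finset.sum_congr rfl fun s _ => ?_
          rw [show (1:ℝ)/k * ∑ a, g (s,a)^2 = ∑ a, 1/k * g (s,a)^2 from Finset.mul_sum _ _ _,
            Finset.mul_sum]
          exact Finset.sum_congr rfl fun a _ => by rw [hν]; ring
  -- bound on the weighted sum of squares
  have hSμ : ∑ p, μ p * (φhat p ⬝ᵥ w) ^ 2
      ≤ 2 * k ^ 2 * (∑ p', ν p' * g p' ^ 2) + 2 * k ^ 2 * ζ := by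
    have hper : ∀ p : S × A, μ p * (φhat p ⬝ᵥ w) ^ 2
        ≤ 2 * k ^ 2 * (μ p * (∑ s, P p s * fg s) ^ 2)
          + 2 * k ^ 2 * (μ p * (∑ s, (Phat p s - P p s) * fg s) ^ 2) := by
      intro p
      have h0 : 0 ≤ ∑ s, Phat p s * h s :=
        Finset.sum_nonneg fun s _ => mul_nonneg (hPhatpos p s) (hh0 s)
      have hle : ∑ s, Phat p s * h s ≤ k * ∑ s, Phat p s * fg s := by
        rw [Finset.mul_sum]
        exact Finset.sum_le_sum fun s _ => by
          have := mul_le_mul_of_nonneg_left (hhfg s) (hPhatpos p s)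
          calc Phat p s * h s ≤ Phat p s * (k * fg s) := this
            _ = k * (Phat p s * fg s) := by ring
      have hsq : (φhat p ⬝ᵥ w) ^ 2 ≤ (k * ∑ s, Phat p s * fg s) ^ 2 := by
        rw [← key1 p]
        exact pow_le_pow_left₀ h0 hle 2
      have hsplit : ∑ s, Phat p s * fg s
          = (∑ s, P p s * fg s) + ∑ s, (Phat p s - P p s) * fg s := by
        rw [← Finset.sum_add_distrib]
        exact Finset.sum_congr rfl fun s _ => by ring
      have h2 : (φhat p ⬝ᵥ w) ^ 2
          ≤ 2 * k ^ 2 * (∑ s, P p s * fg s) ^ 2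
            + 2 * k ^ 2 * (∑ s, (Phat p s - P p s) * fg s) ^ 2 := by
        rw [hsplit] at hsq
        nlinarith [sq_nonneg ((∑ s, P p s * fg s) - ∑ s, (Phat p s - P p s) * fg s),
          sq_nonneg k]
      have := mul_le_mul_of_nonneg_left h2 (hμpos p)
      nlinarith [this]
    calc ∑ p, μ p * (φhat p ⬝ᵥ w) ^ 2
        ≤ ∑ p, (2 * k ^ 2 * (μ p * (∑ s, P p s * fg s) ^ 2)
          + 2 * k ^ 2 * (μ p * (∑ s, (Phat p s - P p s) * fg s) ^ 2)) :=
          Finset.sum_le_sum fun p _ => hper p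
      _ = 2 * k ^ 2 * (∑ p, μ p * (∑ s, P p s * fg s) ^ 2)
          + 2 * k ^ 2 * (∑ p, μ p * (∑ s, (Phat p s - P p s) * fg s) ^ 2) := by
          rw [Finset.sum_add_distrib, ← Finset.mul_sum, ← Finset.mul_sum]
      _ ≤ 2 * k ^ 2 * (∑ p', ν p' * g p' ^ 2) + 2 * k ^ 2 * ζ := by
          have hk2 : (0 : ℝ) ≤ 2 * k ^ 2 := by positivity
          exact add_le_add (mul_le_mul_of_nonneg_left hνbound hk2)
            (mul_le_mul_of_nonneg_left hμerr hk2)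
  -- bound on the plain norm of w
  have hwsq : ∑ j, w j ^ 2 ≤ B ^ 2 * d := by
    have hl : ∀ s, h s / B ∈ Set.Icc (0 : ℝ) 1 :=
      fun s => ⟨div_nonneg (hh0 s) hB.le, (div_le_one hB).2 (hhB s)⟩
    have hwb := hwhat (fun s => h s / B) hl
    have hdiv : (fun j => ∑ s, what s j * (h s / B)) = fun j => w j / B := by
      funext j
      rw [hw]
      rw [Finset.sum_div]
      exact Finset.sum_congr rfl fun s _ => by ring
    rw [hdiv] at hwb
    unfold l2norm at hwb
    have hnn : 0 ≤ ∑ j, (w j / B) ^ 2 := Finset.sum_nonneg fun j _ => sq_nonneg _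
    have hd0 : (0 : ℝ) ≤ d := Nat.cast_nonneg d
    have hsum : ∑ j, (w j / B) ^ 2 ≤ d := by
      nlinarith [Real.sq_sqrt hnn, Real.sq_sqrt hd0, Real.sqrt_nonneg ((d : ℝ)),
        Real.sqrt_nonneg (∑ j, (w j / B) ^ 2), hwb]
    have heq : ∑ j, w j ^ 2 = B ^ 2 * ∑ j, (w j / B) ^ 2 := by
      rw [Finset.mul_sum]
      exact Finset.sum_congr rfl fun j _ => by
        field_simp
    rw [heq]
    exact mul_le_mul_of_nonneg_left hsum (by positivity)
  -- quadratic form bound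
  have hquadSig : w ⬝ᵥ (Sighat *ᵥ w)
      = (n : ℝ) * (∑ p, μ p * (φhat p ⬝ᵥ w) ^ 2) + lam * (∑ j, w j ^ 2) := by
    rw [hSighat, add_mulVec, dotProduct_add, Matrix.smul_mulVec,
      Matrix.smul_mulVec, one_mulVec, dotProduct_smul, dotProduct_smul,
      smul_eq_mul, smul_eq_mul, hMquad]
    congr 1
    congr 1
    simp [dotProduct, sq]
  have hwSig : w ⬝ᵥ (Sighat *ᵥ w)
      ≤ 2 * (n : ℝ) * k ^ 2 * (∑ p', ν p' * g p' ^ 2) + B ^ 2 * lam * d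
        + 2 * (n : ℝ) * k ^ 2 * ζ := by
    rw [hquadSig]
    have hn0 : (0 : ℝ) ≤ n := Nat.cast_nonneg n
    calc (n : ℝ) * (∑ p, μ p * (φhat p ⬝ᵥ w) ^ 2) + lam * (∑ j, w j ^ 2)
        ≤ (n : ℝ) * (2 * k ^ 2 * (∑ p', ν p' * g p' ^ 2) + 2 * k ^ 2 * ζ)
          + lam * (B ^ 2 * d) :=
          add_le_add (mul_le_mul_of_nonneg_left hSμ hn0)
            (mul_le_mul_of_nonneg_left hwsq hlam.le)
      _ = _ := by ring
  -- per-point bound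
  have hc1 : ∀ p : S × A, 0 ≤ φhat p ⬝ᵥ Sighat⁻¹ *ᵥ φhat p := by
    intro p
    have := hSigPD.inv.posSemidef.dotProduct_mulVec_nonneg (φhat p)
    simpa using this
  have hTB : ∀ p : S × A, ∑ s, Phat p s * h s ≤ B := by
    intro p
    calc ∑ s, Phat p s * h s ≤ ∑ s, Phat p s * B :=
          Finset.sum_le_sum fun s _ => mul_le_mul_of_nonneg_left (hhB s) (hPhatpos p s)
      _ = (∑ s, Phat p s) * B := (Finset.sum_mul _ _ _).symm
      _ ≤ 1 * B := mul_le_mul_of_nonneg_right (hPhatsum p) hB.le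
      _ = B := one_mul B
  have hmain : ∀ p : S × A, φhat p ⬝ᵥ w ≤
      min (matNorm Sighat⁻¹ (φhat p) *
        Real.sqrt (2 * (n : ℝ) * k ^ 2 * (∑ p', ν p' * g p' ^ 2)
          + B ^ 2 * lam * d + 2 * (n : ℝ) * k ^ 2 * ζ)) B := by
    intro p
    refine le_min ?_ ?_
    · have hcs := cs_mat hSigPD (φhat p) w
      have h2 : (φhat p ⬝ᵥ w) ^ 2 ≤ (φhat p ⬝ᵥ Sighat⁻¹ *ᵥ φhat p) *
          (2 * (n : ℝ) * k ^ 2 * (∑ p', ν p' * g p' ^ 2)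
            + B ^ 2 * lam * d + 2 * (n : ℝ) * k ^ 2 * ζ) :=
        hcs.trans (mul_le_mul_of_nonneg_left hwSig (hc1 p))
      calc φhat p ⬝ᵥ w ≤ |φhat p ⬝ᵥ w| := le_abs_self _
        _ = Real.sqrt ((φhat p ⬝ᵥ w) ^ 2) := (Real.sqrt_sq_eq_abs _).symm
        _ ≤ Real.sqrt ((φhat p ⬝ᵥ Sighat⁻¹ *ᵥ φhat p) *
            (2 * (n : ℝ) * k ^ 2 * (∑ p', ν p' * g p' ^ 2)
              + B ^ 2 * lam * d + 2 * (n : ℝ) * k ^ 2 * ζ)) := Real.sqrt_le_sqrt h2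
        _ = _ := by rw [Real.sqrt_mul (hc1 p)]; rfl
    · rw [← key1 p]
      exact hTB p
  -- final chain
  calc ∑ p, q p * g p
      = ∑ p : S × A, ∑ p', q' p' * Phat p' p.1 * pol p.1 p.2 * g p := by
        refine Finset.sum_congr rfl fun p _ => ?_
        rw [hq p, Finset.sum_mul]
    _ = ∑ p', ∑ p : S × A, q' p' * Phat p' p.1 * pol p.1 p.2 * g p := Finset.sum_comm
    _ = ∑ p', q' p' * (φhat p' ⬝ᵥ w) := by
        refine Finset.sum_congr rfl fun p' _ => ?_
        rw [← key1 p', Fintype.sum_prod_type, Finset.mul_sum]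
        refine Finset.sum_congr rfl fun s _ => ?_
        simp only [hh, Finset.mul_sum]
        exact Finset.sum_congr rfl fun a _ => by ring
    _ ≤ ∑ p, q' p *
        min (matNorm Sighat⁻¹ (φhat p) *
          Real.sqrt (2 * (n : ℝ) * k ^ 2 * (∑ p', ν p' * g p' ^ 2)
            + B ^ 2 * lam * d + 2 * (n : ℝ) * k ^ 2 * ζ)) B :=
        Finset.sum_le_sum fun p _ => mul_le_mul_of_nonneg_left (hmain p) (hq'pos p)
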